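/- Let f, g : {0,1}^n → {0,1} be increasing Boolean functions. If f and g are both supermodular, or both submodular, then E[fg] − E[f]E[g] ≥ (1/4)·∑_{i=1}^n Inf_i[f]·Inf_i[g], where expectations are with respect to the uniform measure on {0,1}^n. -/

import Mathlib

open Finset MeasureTheory

/-- Expectation with respect to the uniform measure on `{0,1}^n`. -/
noncomputable def Ev (n : ℕ) (f : (Fin n → Bool) → ℝ) : ℝ :=
  (∑ x : Fin n → Bool, f x) / 2 ^ n

/-- `f` is increasing (monotone w.r.t. the coordinatewise order). -/
def Increasing' (n : ℕ) (f : (Fin n → Bool) → ℝ) : Prop :=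
  ∀ x y : Fin n → Bool, (∀ i, x i ≤ y i) → f x ≤ f y

/-- `f` is submodular: `f(x∧y) + f(x∨y) ≤ f(x) + f(y)`. -/
def Submodular' (n : ℕ) (f : (Fin n → Bool) → ℝ) : Prop :=
  ∀ x y : Fin n → Bool,
    f (fun i => x i && y i) + f (fun i => x i || y i) ≤ f x + f y

/-- `f` is supermodular: `f(x) + f(y) ≤ f(x∧y) + f(x∨y)`. -/
def Supermodular' (n : ℕ) (f : (Fin n → Bool) → ℝ) : Prop :=
  ∀ x y : Fin n → Bool,
    f x + f y ≤ f (fun i => x i && y i) + f (fun i => x i || y i)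

/-- Discrete derivative `∂_i f (x) = f(x^{(i→1)}) - f(x^{(i→0)})`. -/
noncomputable def pD (n : ℕ) (i : Fin n) (f : (Fin n → Bool) → ℝ) :
    (Fin n → Bool) → ℝ :=
  fun x => f (Function.update x i true) - f (Function.update x i false)

/-- Character `χ_S(x) = (-1)^{∑_{i ∈ S} x_i}`. -/
noncomputable def chi (n : ℕ) (S : Finset (Fin n)) (x : Fin n → Bool) : ℝ :=
  ∏ i ∈ S, (if x i then (-1 : ℝ) else 1)

/-- Fourier--Walsh coefficient `f̂(S) = E[f · χ_S]`. -/
noncomputable def fhat (n : ℕ) (f : (Fin n → Bool) → ℝ) (S : Finset (Fin n)) : ℝ :=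
  Ev n (fun x => f x * chi n S x)

/-- Heat semigroup `P_t f = ∑_S e^{-t|S|} f̂(S) χ_S`. -/
noncomputable def heat (n : ℕ) (t : ℝ) (f : (Fin n → Bool) → ℝ) :
    (Fin n → Bool) → ℝ :=
  fun x => ∑ S : Finset (Fin n), Real.exp (-(t * S.card)) * fhat n f S * chi n S x

/-- Influence of coordinate `i` on a Boolean (`{0,1}`-valued) function:
`Inf_i[f] = P[f(x) ≠ f(x ⊕ e_i)]`. -/
noncomputable def InfB (n : ℕ) (i : Fin n) (f : (Fin n → Bool) → ℝ) : ℝ :=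
  Ev n (fun x => if f x = f (Function.update x i (! x i)) then 0 else 1)

/-- `L¹`-influence `Inf_i^{(1)}[f] = E[|∂_i f|]`. -/
noncomputable def Inf1 (n : ℕ) (i : Fin n) (f : (Fin n → Bool) → ℝ) : ℝ :=
  Ev n (fun x => |pD n i f x|)

/-- `L²`-influence `Inf_i[f] = E[|∂_i f|²]` for real-valued `f`. -/
noncomputable def Inf2 (n : ℕ) (i : Fin n) (f : (Fin n → Bool) → ℝ) : ℝ :=
  Ev n (fun x => |pD n i f x| ^ 2)

/-- Difference operator `D_i f (x) = f(x) - f(x ⊕ e_i)`. -/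
noncomputable def Dop (n : ℕ) (i : Fin n) (f : (Fin n → Bool) → ℝ) :
    (Fin n → Bool) → ℝ :=
  fun x => f x - f (Function.update x i (! x i))

/-- `‖f‖_p = (E[|f|^p])^{1/p}` (also used as a quasi-norm for `0 < p < 1`). -/
noncomputable def nrm (n : ℕ) (p : ℝ) (f : (Fin n → Bool) → ℝ) : ℝ :=
  (Ev n (fun x => |f x| ^ p)) ^ (1 / p)

/-- Iterated discrete derivative along a list of coordinates. -/
noncomputable def pDList (n : ℕ) : List (Fin n) → ((Fin n → Bool) → ℝ) → ((Fin n → Bool) → ℝ)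
  | [], f => f
  | i :: l, f => pD n i (pDList n l f)

/-- `∂_T f = ∂_{i₁} ∘ ⋯ ∘ ∂_{i_d} f` for `T = {i₁ < ⋯ < i_d}` (the order is immaterial
since discrete derivatives along distinct coordinates commute). -/
noncomputable def pDT (n : ℕ) (T : Finset (Fin n)) (f : (Fin n → Bool) → ℝ) :
    (Fin n → Bool) → ℝ :=
  pDList n (T.sort (· ≤ ·)) f

/-- AND-indicator over a set `A`. -/
noncomputable def aInd (n : ℕ) (A : Finset (Fin n)) : (Fin n → Bool) → ℝ :=
  fun x => if ∀ i ∈ A, x i = true then 1 else 0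

lemma sum_prod_bool (n : ℕ) (h : Fin n → Bool → ℝ) :
    ∑ x : Fin n → Bool, ∏ i, h i (x i) = ∏ i, (h i false + h i true) := by
  rw [← Fintype.prod_sum h]; congr 1; funext i; simp [add_comm]

lemma Ev_prod (n : ℕ) (h : Fin n → Bool → ℝ) :
    Ev n (fun x => ∏ i, h i (x i)) = ∏ i, ((h i false + h i true) / 2) := by
  simp only [Ev]
  rw [sum_prod_bool, Finset.prod_div_distrib, Finset.prod_const]
  simp [Finset.card_univ]

lemma aInd_eq_prod (n : ℕ) (A : Finset (Fin n)) (x : Fin n → Bool) :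
    aInd n A x = ∏ i, (if i ∈ A then (if x i then (1:ℝ) else 0) else 1) := by
  by_cases h : ∀ i ∈ A, x i = true
  · rw [aInd, if_pos h, eq_comm]
    apply Finset.prod_eq_one
    intro i _
    by_cases hi : i ∈ A
    · simp [hi, h i hi]
    · simp [hi]
  · rw [aInd, if_neg h, eq_comm]
    push_neg at h
    obtain ⟨i, hiA, hx⟩ := h
    apply Finset.prod_eq_zero (Finset.mem_univ i)
    simp [hiA, hx]

lemma prod_ite_half (n : ℕ) (A : Finset (Fin n)) :
    (∏ i, (if i ∈ A then (1/2:ℝ) else 1)) = (1/2:ℝ) ^ A.card := by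
  rw [Finset.prod_ite_mem, Finset.univ_inter, Finset.prod_const]

lemma Ev_aInd (n : ℕ) (A : Finset (Fin n)) :
    Ev n (aInd n A) = (1/2:ℝ) ^ A.card := by
  have h1 : Ev n (aInd n A)
      = Ev n (fun x => ∏ i, (if i ∈ A then (if x i then (1:ℝ) else 0) else 1)) := by
    simp only [Ev]
    congr 1
    exact Finset.sum_congr rfl fun x _ => aInd_eq_prod n A x
  rw [h1]
  have h2 := Ev_prod n (fun i b => if i ∈ A then (if b then (1:ℝ) else 0) else 1)
  rw [h2, ← prod_ite_half n A]
  apply Finset.prod_congr rfl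
  intro i _
  by_cases hi : i ∈ A <;> simp [hi] <;> norm_num

lemma Ev_aInd_mul (n : ℕ) (A B : Finset (Fin n)) :
    Ev n (fun x => aInd n A x * aInd n B x) = (1/2:ℝ) ^ (A ∪ B).card := by
  have h1 : Ev n (fun x => aInd n A x * aInd n B x)
      = Ev n (fun x => ∏ i, ((if i ∈ A then (if x i then (1:ℝ) else 0) else 1) *
          (if i ∈ B then (if x i then (1:ℝ) else 0) else 1))) := by
    simp only [Ev]
    congr 1
    apply Finset.sum_congr rfl
    intro x _
    rw [aInd_eq_prod n A x, aInd_eq_prod n B x, ← Finset.prod_mul_distrib]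
  rw [h1]
  have h2 := Ev_prod n (fun i b => (if i ∈ A then (if b then (1:ℝ) else 0) else 1) *
      (if i ∈ B then (if b then (1:ℝ) else 0) else 1))
  rw [h2, ← prod_ite_half n (A ∪ B)]
  apply Finset.prod_congr rfl
  intro i _
  by_cases hA : i ∈ A <;> by_cases hB : i ∈ B <;>
    simp [hA, hB, Finset.mem_union] <;> norm_num

lemma aInd_update_ne (n : ℕ) (A : Finset (Fin n)) (i : Fin n) (x : Fin n → Bool) :
    (if aInd n A x = aInd n A (Function.update x i (! x i)) then (0:ℝ) else 1)
      = if i ∈ A then aInd n (A.erase i) x else 0 := by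
  by_cases hiA : i ∈ A
  · rw [if_pos hiA]
    have haux : ∀ b : Bool, aInd n A (Function.update x i b)
        = if (b = true ∧ ∀ j ∈ A.erase i, x j = true) then (1:ℝ) else 0 := by
      intro b
      rw [aInd]
      apply if_congr _ rfl rfl
      constructor
      · intro h
        refine ⟨by simpa using h i hiA, fun j hj => ?_⟩
        have hji : j ≠ i := Finset.ne_of_mem_erase hj
        have := h j (Finset.mem_of_mem_erase hj)
        simpa [Function.update_apply, hji] using this
      · rintro ⟨hb, h⟩ j hj
        by_cases hji : j = i
        · subst hji; simpa using hb
        · simpa [Function.update_apply, hji] using h j (Finset.mem_erase.mpr ⟨hji, hj⟩)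
    have hx : aInd n A x = if (x i = true ∧ ∀ j ∈ A.erase i, x j = true) then (1:ℝ) else 0 := by
      have := haux (x i)
      rwa [Function.update_eq_self] at this
    rw [hx, haux]
    by_cases he : ∀ j ∈ A.erase i, x j = true
    · cases hxi : x i
      · have c1 : ¬((false : Bool) = true ∧ ∀ j ∈ A.erase i, x j = true) := by simp
        have c2 : ((!(false : Bool)) = true ∧ ∀ j ∈ A.erase i, x j = true) := ⟨rfl, he⟩
        rw [if_neg c1, if_pos c2, if_neg (by norm_num : (0:ℝ) ≠ 1), aInd, if_pos he]
      · have c1 : ((true : Bool) = true ∧ ∀ j ∈ A.erase i, x j = true) := ⟨rfl, he⟩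
        have c2 : ¬((!(true : Bool)) = true ∧ ∀ j ∈ A.erase i, x j = true) := by simp
        rw [if_pos c1, if_neg c2, if_neg (by norm_num : (1:ℝ) ≠ 0), aInd, if_pos he]
    · have c1 : ¬(x i = true ∧ ∀ j ∈ A.erase i, x j = true) := fun h => he h.2
      have c2 : ¬((! x i) = true ∧ ∀ j ∈ A.erase i, x j = true) := fun h => he h.2
      rw [if_neg c1, if_neg c2, if_pos rfl, aInd, if_neg he]
  · rw [if_neg hiA]
    have : aInd n A (Function.update x i (! x i)) = aInd n A x := by
      rw [aInd, aInd]
      apply if_congr _ rfl rfl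
      constructor <;> intro h j hj <;> have hji : j ≠ i := fun hh => hiA (hh ▸ hj)
      · have := h j hj; rwa [Function.update_apply, if_neg hji] at this
      · rw [Function.update_apply, if_neg hji]; exact h j hj
    rw [this, if_pos rfl]

lemma InfB_aInd (n : ℕ) (i : Fin n) (A : Finset (Fin n)) :
    InfB n i (aInd n A) = if i ∈ A then 2 * (1/2:ℝ) ^ A.card else 0 := by
  have h1 : InfB n i (aInd n A)
      = Ev n (fun x => if i ∈ A then aInd n (A.erase i) x else 0) := by
    rw [InfB]
    congr 1
    funext x
    exact aInd_update_ne n A i x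
  rw [h1]
  by_cases hiA : i ∈ A
  · simp only [if_pos hiA]
    have : Ev n (fun x => aInd n (A.erase i) x) = (1/2:ℝ) ^ (A.erase i).card :=
      Ev_aInd n (A.erase i)
    rw [this]
    have hc : A.card = (A.erase i).card + 1 := (Finset.card_erase_add_one hiA).symm
    rw [hc, pow_succ]
    ring
  · simp only [if_neg hiA]
    simp [Ev]

lemma struct_super (n : ℕ) (f : (Fin n → Bool) → ℝ)
    (hf01 : ∀ x, f x = 0 ∨ f x = 1) (hf : Increasing' n f) (hs : Supermodular' n f) :
    (∀ x, f x = 0) ∨ ∃ A : Finset (Fin n), f = aInd n A := by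
  by_cases hz : ∀ x, f x = 0
  · exact Or.inl hz
  right
  push_neg at hz
  obtain ⟨x0, hx0'⟩ := hz
  have hx0 : f x0 = 1 := (hf01 x0).resolve_left hx0'
  set U : Finset (Fin n → Bool) := Finset.univ.filter (fun x => f x = 1) with hU
  have hmemU : ∀ x, x ∈ U ↔ f x = 1 := by intro x; simp [hU]
  have hUne : U.Nonempty := ⟨x0, (hmemU x0).mpr hx0⟩
  have hinf_eq : ∀ x y : Fin n → Bool, x ⊓ y = fun i => x i && y i := by
    intro x y; funext i
    show x i ⊓ y i = _
    rcases x i <;> rcases y i <;> rfl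
  have hclosed : ∀ x ∈ {z : Fin n → Bool | f z = 1}, ∀ y ∈ {z : Fin n → Bool | f z = 1},
      x ⊓ y ∈ {z : Fin n → Bool | f z = 1} := by
    intro x hx y hy
    simp only [Set.mem_setOf_eq] at hx hy ⊢
    have h1 := hs x y
    rw [hx, hy] at h1
    rw [hinf_eq]
    rcases hf01 (fun i => x i && y i) with h2 | h2
    · exfalso
      rcases hf01 (fun i => x i || y i) with h3 | h3 <;> rw [h2, h3] at h1 <;> linarith
    · exact h2
  set m : Fin n → Bool := U.inf' hUne id with hm
  have hfm : f m = 1 := by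
    have := Finset.inf'_mem {z : Fin n → Bool | f z = 1} hclosed U hUne id
      (fun z hz => (hmemU z).mp hz)
    exact this
  set A : Finset (Fin n) := Finset.univ.filter (fun i => m i = true) with hA
  refine ⟨A, funext fun x => ?_⟩
  rcases hf01 x with hfx | hfx
  · rw [hfx, aInd, eq_comm, if_neg]
    intro hall
    have hmx : ∀ i, m i ≤ x i := by
      intro i
      cases hmi : m i
      · exact Bool.false_le _
      · have hiA : i ∈ A := by simp [hA, hmi]
        rw [hall i hiA]
    have := hf m x hmx
    rw [hfm, hfx] at this
    linarith
  · rw [hfx, aInd, eq_comm, if_pos]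
    intro i hiA
    have hmi : m i = true := by simpa [hA] using hiA
    have hmle : m ≤ x := Finset.inf'_le id ((hmemU x).mpr hfx)
    exact Bool.le_iff_imp.mp (hmle i) hmi

lemma Ev_comp_neg (n : ℕ) (F : (Fin n → Bool) → ℝ) :
    Ev n (fun x => F (fun i => ! x i)) = Ev n F := by
  simp only [Ev]
  congr 1
  exact Equiv.sum_comp (Function.Involutive.toPerm (fun x : Fin n → Bool => fun i => ! x i)
    (fun x => by funext i; simp)) F

lemma key_super (n : ℕ) (f g : (Fin n → Bool) → ℝ)
    (hf01 : ∀ x, f x = 0 ∨ f x = 1) (hg01 : ∀ x, g x = 0 ∨ g x = 1)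
    (hf : Increasing' n f) (hg : Increasing' n g)
    (hfs : Supermodular' n f) (hgs : Supermodular' n g) :
    Ev n (fun x => f x * g x) - Ev n f * Ev n g ≥
      (1 / 4) * ∑ i : Fin n, InfB n i f * InfB n i g := by
  rcases struct_super n f hf01 hf hfs with h0 | ⟨A, rfl⟩
  · have hz : f = fun _ => 0 := funext h0
    subst hz
    simp [Ev, InfB]
  rcases struct_super n g hg01 hg hgs with h0 | ⟨B, rfl⟩
  · have hz : g = fun _ => 0 := funext h0
    subst hz
    simp [Ev, InfB]
  rw [Ev_aInd_mul n A B, Ev_aInd n A, Ev_aInd n B]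
  have hsum : ∑ i : Fin n, InfB n i (aInd n A) * InfB n i (aInd n B)
      = ((A ∩ B).card : ℝ) * (4 * (1/2:ℝ)^A.card * (1/2:ℝ)^B.card) := by
    have hpt : ∀ i : Fin n, InfB n i (aInd n A) * InfB n i (aInd n B)
        = if i ∈ A ∩ B then (4 * (1/2:ℝ)^A.card * (1/2:ℝ)^B.card) else 0 := by
      intro i
      rw [InfB_aInd, InfB_aInd]
      by_cases hA : i ∈ A <;> by_cases hB : i ∈ B <;>
        simp [hA, hB, Finset.mem_inter] <;> ring
    rw [Finset.sum_congr rfl fun i _ => hpt i, Finset.sum_ite_mem, Finset.univ_inter,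
      Finset.sum_const, nsmul_eq_mul]
  rw [hsum]
  have hcard : (A ∪ B).card + (A ∩ B).card = A.card + B.card :=
    Finset.card_union_add_card_inter A B
  set a := A.card with ha
  set b := B.card with hb
  set u := (A ∪ B).card with hu
  set k := (A ∩ B).card with hk
  have h1 : (1/2:ℝ)^a * (1/2:ℝ)^b = (1/2:ℝ)^u * (1/2:ℝ)^k := by
    rw [← pow_add, ← pow_add, hcard]
  have h2 : (k:ℝ) + 1 ≤ 2^k := by
    have := Nat.lt_two_pow_self (n := k)
    have h' : k + 1 ≤ 2^k := Nat.succ_le_of_lt this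
    exact_mod_cast h'
  have h4 : (0:ℝ) < (1/2:ℝ)^u := by positivity
  have h5 : (0:ℝ) < (1/2:ℝ)^k := by positivity
  have h6 : (k:ℝ) * (1/2:ℝ)^k + (1/2:ℝ)^k ≤ 1 := by
    have hm : ((k:ℝ)+1) * (1/2:ℝ)^k ≤ (2:ℝ)^k * (1/2:ℝ)^k :=
      mul_le_mul_of_nonneg_right h2 h5.le
    have h3 : (2:ℝ)^k * (1/2:ℝ)^k = 1 := by
      rw [← mul_pow]; norm_num
    nlinarith
  have h7 : (1/2:ℝ)^u * ((k:ℝ) * (1/2:ℝ)^k + (1/2:ℝ)^k) ≤ (1/2:ℝ)^u * 1 :=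
    mul_le_mul_of_nonneg_left h6 h4.le
  have h1' : (k:ℝ) * ((1/2:ℝ)^a * (1/2:ℝ)^b) = (k:ℝ) * ((1/2:ℝ)^u * (1/2:ℝ)^k) := by
    rw [h1]
  nlinarith [h7, h1, h1']

lemma Ev_one_sub (n : ℕ) (F : (Fin n → Bool) → ℝ) :
    Ev n (fun x => 1 - F x) = 1 - Ev n F := by
  simp only [Ev]
  rw [Finset.sum_sub_distrib, Finset.sum_const, Finset.card_univ, nsmul_eq_mul]
  have hc : ((Fintype.card (Fin n → Bool) : ℝ)) = 2^n := by
    simp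
  rw [hc]
  have h2 : ((2:ℝ))^n ≠ 0 := by positivity
  field_simp

lemma Ev_mul_one_sub (n : ℕ) (F G : (Fin n → Bool) → ℝ) :
    Ev n (fun x => (1 - F x) * (1 - G x))
      = 1 - Ev n F - Ev n G + Ev n (fun x => F x * G x) := by
  simp only [Ev]
  have hsum : ∑ x : Fin n → Bool, (1 - F x) * (1 - G x)
      = 2^n - (∑ x : Fin n → Bool, F x) - (∑ x : Fin n → Bool, G x)
        + ∑ x : Fin n → Bool, F x * G x := by
    have hpt : ∀ x : Fin n → Bool, (1 - F x) * (1 - G x) = 1 - F x - G x + F x * G x :=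
      fun x => by ring
    rw [Finset.sum_congr rfl fun x _ => hpt x, Finset.sum_add_distrib,
      Finset.sum_sub_distrib, Finset.sum_sub_distrib, Finset.sum_const, Finset.card_univ,
      nsmul_eq_mul]
    have hc : ((Fintype.card (Fin n → Bool) : ℝ)) = 2^n := by simp
    rw [hc]
    ring
  rw [hsum]
  have h2 : ((2:ℝ))^n ≠ 0 := by positivity
  field_simp

lemma InfB_one_sub_neg (n : ℕ) (i : Fin n) (F : (Fin n → Bool) → ℝ) :
    InfB n i (fun x => 1 - F (fun j => ! x j)) = InfB n i F := by
  simp only [InfB]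
  rw [← Ev_comp_neg n (fun y => if F y = F (Function.update y i (! y i)) then (0:ℝ) else 1)]
  congr 1
  funext x
  simp only []
  have hupd : (fun j => ! (Function.update x i (! x i) j))
      = Function.update (fun j => ! x j) i (! (! (x i))) := by
    funext j
    by_cases hj : j = i
    · subst hj; simp
    · simp [Function.update_apply, hj]
  apply if_congr _ rfl rfl
  rw [sub_right_inj, hupd]

/-- For increasing Boolean functions `f, g : {0,1}^n → {0,1}` that are
both supermodular or both submodular,
`E[fg] − E[f]E[g] ≥ (1/4) ∑_i Inf_i[f]·Inf_i[g]`. -/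
theorem dream_inequality_boolean (n : ℕ) (f g : (Fin n → Bool) → ℝ)
    (hf01 : ∀ x, f x = 0 ∨ f x = 1) (hg01 : ∀ x, g x = 0 ∨ g x = 1)
    (hf : Increasing' n f) (hg : Increasing' n g)
    (hmod : (Supermodular' n f ∧ Supermodular' n g) ∨
            (Submodular' n f ∧ Submodular' n g)) :
    Ev n (fun x => f x * g x) - Ev n f * Ev n g ≥
      (1 / 4) * ∑ i : Fin n, InfB n i f * InfB n i g := by
  rcases hmod with ⟨hfs, hgs⟩ | ⟨hfsub, hgsub⟩
  · exact key_super n f g hf01 hg01 hf hg hfs hgs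
  · -- reduce to supermodular via negation
    have hf'01 : ∀ x : Fin n → Bool,
        (fun x => 1 - f (fun i => ! x i)) x = 0 ∨ (fun x => 1 - f (fun i => ! x i)) x = 1 := by
      intro x
      rcases hf01 (fun i => ! x i) with h | h <;> simp [h]
    have hg'01 : ∀ x : Fin n → Bool,
        (fun x => 1 - g (fun i => ! x i)) x = 0 ∨ (fun x => 1 - g (fun i => ! x i)) x = 1 := by
      intro x
      rcases hg01 (fun i => ! x i) with h | h <;> simp [h]
    have hnegle : ∀ x y : Fin n → Bool, (∀ i, x i ≤ y i) → ∀ i, (! y i) ≤ (! x i) := by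
      intro x y hxy i
      have := hxy i
      revert this
      cases x i <;> cases y i <;> simp
    have hf'inc : Increasing' n (fun x => 1 - f (fun i => ! x i)) := by
      intro x y hxy
      have h := hf _ _ (hnegle x y hxy)
      simp only []
      linarith
    have hg'inc : Increasing' n (fun x => 1 - g (fun i => ! x i)) := by
      intro x y hxy
      have h := hg _ _ (hnegle x y hxy)
      simp only []
      linarith
    have e1 : ∀ x y : Fin n → Bool,
        (fun j => ! (x j && y j)) = (fun j => (! x j) || (! y j)) := by
      intro x y; funext j; cases x j <;> cases y j <;> rfl
    have e2 : ∀ x y : Fin n → Bool,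
        (fun j => ! (x j || y j)) = (fun j => (! x j) && (! y j)) := by
      intro x y; funext j; cases x j <;> cases y j <;> rfl
    have hf'super : Supermodular' n (fun x => 1 - f (fun i => ! x i)) := by
      intro x y
      have h := hfsub (fun i => ! x i) (fun i => ! y i)
      show (1 - f (fun j => ! x j)) + (1 - f (fun j => ! y j)) ≤
        (1 - f (fun j => ! (x j && y j))) + (1 - f (fun j => ! (x j || y j)))
      rw [e1 x y, e2 x y]
      linarith
    have hg'super : Supermodular' n (fun x => 1 - g (fun i => ! x i)) := by
      intro x y
      have h := hgsub (fun i => ! x i) (fun i => ! y i)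
      show (1 - g (fun j => ! x j)) + (1 - g (fun j => ! y j)) ≤
        (1 - g (fun j => ! (x j && y j))) + (1 - g (fun j => ! (x j || y j)))
      rw [e1 x y, e2 x y]
      linarith
    have hkey := key_super n (fun x => 1 - f (fun i => ! x i)) (fun x => 1 - g (fun i => ! x i))
      hf'01 hg'01 hf'inc hg'inc hf'super hg'super
    have t1 : Ev n (fun x => 1 - f (fun i => ! x i)) = 1 - Ev n f := by
      rw [Ev_comp_neg n (fun y => 1 - f y), Ev_one_sub]
    have t2 : Ev n (fun x => 1 - g (fun i => ! x i)) = 1 - Ev n g := by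
      rw [Ev_comp_neg n (fun y => 1 - g y), Ev_one_sub]
    have t3 : Ev n (fun x => (1 - f (fun i => ! x i)) * (1 - g (fun i => ! x i)))
        = 1 - Ev n f - Ev n g + Ev n (fun x => f x * g x) := by
      rw [Ev_comp_neg n (fun y => (1 - f y) * (1 - g y)), Ev_mul_one_sub]
    have t4 : ∀ i, InfB n i (fun x => 1 - f (fun j => ! x j)) = InfB n i f :=
      fun i => InfB_one_sub_neg n i f
    have t5 : ∀ i, InfB n i (fun x => 1 - g (fun j => ! x j)) = InfB n i g :=
      fun i => InfB_one_sub_neg n i g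
    have hsum : ∑ i : Fin n, InfB n i (fun x => 1 - f (fun j => ! x j)) *
        InfB n i (fun x => 1 - g (fun j => ! x j)) = ∑ i : Fin n, InfB n i f * InfB n i g :=
      Finset.sum_congr rfl fun i _ => by rw [t4 i, t5 i]
    rw [t1, t2, t3, hsum] at hkey
    have hexp : (1 - Ev n f) * (1 - Ev n g)
        = 1 - Ev n f - Ev n g + Ev n f * Ev n g := by ring
    linarith [hkey, hexp]
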